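/- arXiv:2502.11324 — 2 statements merged into one kernel-verified Lean document; each statement's English description precedes it below -/
import Mathlib

section
/- For B a chi-squared random variable with d degrees of freedom and any s > 0, the probability that B ≥ d + 2*sqrt(d)*s + 2*s^2 is at most exp(-s^2). -/
open MeasureTheory ProbabilityTheory Real

lemma gaussianReal_std_eq : gaussianReal 0 1 =
    MeasureTheory.volume.withDensity fun x => ((gaussianPDFReal 0 1 x).toNNReal : ENNReal) := by
  rw [gaussianReal_of_var_ne_zero 0 one_ne_zero]
  rfl

lemma pdf_smul_eq {t : ℝ} (x : ℝ) :
    (gaussianPDFReal 0 1 x).toNNReal • Real.exp (t * x ^ 2)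
      = (Real.sqrt (2 * π))⁻¹ * Real.exp (-(1/2 - t) * x ^ 2) := by
  rw [NNReal.smul_def, Real.coe_toNNReal _ (gaussianPDFReal_nonneg 0 1 x)]
  simp only [gaussianPDFReal, NNReal.coe_one, mul_one, sub_zero, smul_eq_mul]
  rw [mul_assoc, ← Real.exp_add]
  congr 1
  ring

lemma gaussian_integrable_exp_sq {t : ℝ} (ht : t < 1/2) :
    Integrable (fun x => Real.exp (t * x ^ 2)) (gaussianReal 0 1) := by
  have h12 : (0:ℝ) < 1/2 - t := by linarith
  rw [gaussianReal_std_eq, integrable_withDensity_iff_integrable_smul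
    ((measurable_gaussianPDFReal 0 1).real_toNNReal)]
  simp_rw [pdf_smul_eq]
  exact (integrable_exp_neg_mul_sq h12).const_mul _

lemma gaussian_mgf_sq {t : ℝ} (ht : t < 1/2) :
    ∫ x, Real.exp (t * x ^ 2) ∂(gaussianReal 0 1) = (Real.sqrt (1 - 2*t))⁻¹ := by
  have h12 : (0:ℝ) < 1 - 2*t := by linarith
  have h12' : (0:ℝ) < 1/2 - t := by linarith
  rw [gaussianReal_std_eq, integral_withDensity_eq_integral_smul
    ((measurable_gaussianPDFReal 0 1).real_toNNReal)]
  simp_rw [pdf_smul_eq]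
  rw [integral_const_mul, integral_gaussian]
  rw [show π / (1/2 - t) = (2*π) / (1 - 2*t) by
    rw [div_eq_div_iff (by linarith : (0:ℝ) < 1/2 - t).ne' h12.ne']; ring]
  rw [Real.sqrt_div (by positivity : (0:ℝ) ≤ 2*π)]
  have h2π : (0:ℝ) < Real.sqrt (2*π) := Real.sqrt_pos.mpr (by positivity)
  field_simp

lemma integral_pi_pow (μ : Measure ℝ) [IsProbabilityMeasure μ] (d : ℕ) (f : ℝ → ℝ) :
    ∫ z : Fin d → ℝ, ∏ i, f (z i) ∂(Measure.pi fun _ => μ) = (∫ x, f x ∂μ) ^ d := by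
  letI : MeasureSpace ℝ := ⟨μ⟩
  haveI : SigmaFinite (volume : Measure ℝ) := inferInstanceAs (SigmaFinite μ)
  simpa using MeasureTheory.integral_fintype_prod_eq_pow (ι := Fin d) f (μ := μ)

lemma integrable_pi_prod (μ : Measure ℝ) [IsProbabilityMeasure μ] (d : ℕ) (f : ℝ → ℝ)
    (hf : Integrable f μ) :
    Integrable (fun z : Fin d → ℝ => ∏ i, f (z i)) (Measure.pi fun _ => μ) := by
  letI : MeasureSpace ℝ := ⟨μ⟩
  haveI : SigmaFinite (volume : Measure ℝ) := inferInstanceAs (SigmaFinite μ)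
  exact MeasureTheory.Integrable.fintype_prod (fun _ => hf)

/-- Laurent–Massart tail bound: for `B` a chi-squared random variable with `d` degrees of
freedom (the sum of `d` squared independent standard normals) and any `s > 0`, the
probability that `B ≥ d + 2√d·s + 2s²` is at most `exp(-s²)`. -/
theorem laurent_massart_upper_tail (d : ℕ) (s : ℝ) (hs : 0 < s) :
    (Measure.pi fun _ : Fin d => gaussianReal 0 1)
      {z | (d : ℝ) + 2 * Real.sqrt d * s + 2 * s ^ 2 ≤ ∑ j, (z j) ^ 2}
      ≤ ENNReal.ofReal (Real.exp (-s ^ 2)) := by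
  rcases Nat.eq_zero_or_pos d with hd | hd
  · subst hd
    have h : ∀ z : Fin 0 → ℝ,
        ¬ (((0:ℕ) : ℝ) + 2 * Real.sqrt ((0:ℕ):ℝ) * s + 2 * s ^ 2 ≤ ∑ j, (z j) ^ 2) := by
      intro z
      simp only [Finset.univ_eq_empty, Finset.sum_empty, Nat.cast_zero, Real.sqrt_zero,
        mul_zero, zero_mul, add_zero, zero_add, not_le]
      nlinarith
    have hz : (Measure.pi fun _ : Fin 0 => gaussianReal 0 1)
        {z : Fin 0 → ℝ | ((0:ℕ) : ℝ) + 2 * Real.sqrt ((0:ℕ):ℝ) * s + 2 * s ^ 2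
          ≤ ∑ j, (z j) ^ 2} = 0 :=
      measure_mono_null (fun z hz => (h z hz).elim) measure_empty
    exact le_trans (le_of_eq hz) zero_le
  · set r : ℝ := Real.sqrt (d : ℝ) with hrdef
    have hdpos : (0:ℝ) < d := by exact_mod_cast hd
    have hr : 0 < r := Real.sqrt_pos.mpr hdpos
    have hr2 : r ^ 2 = (d : ℝ) := Real.sq_sqrt hdpos.le
    set t : ℝ := s / (r + 2*s) with htdef
    have hrs : 0 < r + 2*s := by linarith
    have ht0 : 0 < t := div_pos hs hrs
    have ht : t < 1/2 := by
      rw [htdef, div_lt_iff₀ hrs]; linarith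
    have h12 : 1 - 2*t = r / (r + 2*s) := by
      rw [htdef]; field_simp; ring
    have h12pos : 0 < 1 - 2*t := by rw [h12]; positivity
    set μ := Measure.pi fun _ : Fin d => gaussianReal 0 1 with hμdef
    set ε : ℝ := (d : ℝ) + 2 * r * s + 2 * s ^ 2 with hεdef
    have h_int : Integrable (fun z : Fin d → ℝ => Real.exp (t * ∑ j, (z j)^2)) μ := by
      have hprod : ∀ z : Fin d → ℝ,
          Real.exp (t * ∑ j, (z j)^2) = ∏ j, Real.exp (t * (z j)^2) := by
        intro z; rw [Finset.mul_sum, Real.exp_sum]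
      simp_rw [hprod]
      exact integrable_pi_prod _ _ _ (gaussian_integrable_exp_sq ht)
    have hcher := measure_ge_le_exp_mul_mgf (X := fun z : Fin d → ℝ => ∑ j, (z j)^2)
      (μ := μ) ε ht0.le h_int
    have hmgf : mgf (fun z : Fin d → ℝ => ∑ j, (z j)^2) μ t
        = ((Real.sqrt (1-2*t))⁻¹) ^ d := by
      simp only [mgf]
      have hprod : ∀ z : Fin d → ℝ,
          Real.exp (t * ∑ j, (z j)^2) = ∏ j, Real.exp (t * (z j)^2) := by
        intro z; rw [Finset.mul_sum, Real.exp_sum]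
      simp_rw [hprod]
      have hip := integral_pi_pow (gaussianReal 0 1) d (fun y => Real.exp (t * y ^ 2))
      rw [gaussian_mgf_sq ht] at hip
      rw [hμdef]
      exact hip
    have hsqrtpos : 0 < Real.sqrt (1-2*t) := Real.sqrt_pos.mpr h12pos
    have hpow : ((Real.sqrt (1-2*t))⁻¹ : ℝ) ^ d
        = Real.exp ((d:ℝ) * (-(1/2) * Real.log (1-2*t))) := by
      have h1 : Real.sqrt (1-2*t) = Real.exp (Real.log (1-2*t) / 2) := by
        rw [← Real.log_sqrt h12pos.le, Real.exp_log hsqrtpos]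
      rw [h1, ← Real.exp_neg, ← Real.exp_nat_mul]
      congr 1
      ring
    have hlog : -Real.log (1-2*t) ≤ ((1-2*t)⁻¹ - (1-2*t)) / 2 := by
      have hlt1 : 1 - 2*t < 1 := by linarith
      have hinvpos : (0:ℝ) < (1-2*t)⁻¹ := inv_pos.mpr h12pos
      have hinv1 : (1:ℝ) ≤ (1-2*t)⁻¹ := (one_le_inv₀ h12pos).mpr hlt1.le
      have h0 : 0 ≤ Real.log (1-2*t)⁻¹ := Real.log_nonneg hinv1
      have h := Real.self_le_sinh_iff.mpr h0
      rw [Real.sinh_eq, Real.exp_log hinvpos, Real.exp_neg, Real.exp_log hinvpos,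
        inv_inv, Real.log_inv] at h
      linarith
    have hd0 : (0:ℝ) ≤ (d:ℝ) := Nat.cast_nonneg d
    have h2 : (d:ℝ) * (-(1/2) * Real.log (1-2*t))
        ≤ (d:ℝ) * (((1-2*t)⁻¹ - (1-2*t)) / 4) := by
      nlinarith [mul_le_mul_of_nonneg_left hlog (by positivity : (0:ℝ) ≤ (d:ℝ)/2)]
    have h3 : -t*ε + (d:ℝ) * (((1-2*t)⁻¹ - (1-2*t)) / 4) = -s^2 := by
      rw [h12, inv_div, hεdef, htdef, ← hr2]
      field_simp
      ring
    have hfinal : Real.exp (-t * ε) * ((Real.sqrt (1-2*t))⁻¹) ^ d ≤ Real.exp (-s^2) := by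
      rw [hpow, ← Real.exp_add, Real.exp_le_exp]
      linarith
    calc μ {z : Fin d → ℝ | ε ≤ ∑ j, (z j)^2}
        = ENNReal.ofReal ((μ {z : Fin d → ℝ | ε ≤ ∑ j, (z j)^2}).toReal) :=
          (ENNReal.ofReal_toReal (measure_ne_top _ _)).symm
      _ ≤ ENNReal.ofReal (Real.exp (-t*ε)
            * mgf (fun z : Fin d → ℝ => ∑ j, (z j)^2) μ t) :=
          ENNReal.ofReal_le_ofReal hcher
      _ ≤ ENNReal.ofReal (Real.exp (-s^2)) := by
          rw [hmgf]
          exact ENNReal.ofReal_le_ofReal hfinal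
end

section
/- Let μ̄ be the sample mean of n i.i.d. samples from N(μ, I_d). Then for every t > 0, with probability at least 1 - exp(-t^2/2), one has ||μ - μ̄|| < sqrt((d + sqrt(2d)*t + t^2)/n). -/
open MeasureTheory ProbabilityTheory Real ENNReal

lemma lintegral_pi_prod {m : ℕ} {α : Type*} [MeasurableSpace α]
    (ν : Fin m → Measure α) [∀ i, SigmaFinite (ν i)] {f : Fin m → α → ℝ≥0∞}
    (hf : ∀ i, Measurable (f i)) :
    ∫⁻ x, ∏ i, f i (x i) ∂Measure.pi ν = ∏ i, ∫⁻ y, f i y ∂(ν i) := by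
  induction m with
  | zero => simp
  | succ m ih =>
    have hmp := (measurePreserving_piFinSuccAbove ν 0).symm
    have hmeas : Measurable fun x : Fin (m+1) → α => ∏ i, f i (x i) :=
      Finset.measurable_prod _ fun i _ => (hf i).comp (measurable_pi_apply i)
    rw [← hmp.lintegral_comp hmeas]
    simp only [Function.comp_def, MeasurableEquiv.piFinSuccAbove_symm_apply, Fin.insertNthEquiv,
      Equiv.coe_fn_mk, Fin.insertNth_zero, Fin.prod_univ_succ, Fin.cons_zero, Fin.cons_succ,
      Fin.zero_succAbove, cast_eq]
    rw [lintegral_prod_mul (f := fun y => f 0 y)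
      (g := fun x : Fin m → α => ∏ i, f i.succ (x i)) (hf 0).aemeasurable
      (Finset.measurable_prod _ fun i _ => (hf _).comp (measurable_pi_apply i)).aemeasurable]
    rw [ih (fun i => ν i.succ) (fun i => hf _)]

lemma lintegral_exp_gaussian (m s : ℝ) :
    ∫⁻ x, ENNReal.ofReal (Real.exp (s * x)) ∂gaussianReal m 1 =
      ENNReal.ofReal (Real.exp (s * m + s ^ 2 / 2)) := by
  rw [gaussianReal_of_var_ne_zero m one_ne_zero,
    lintegral_withDensity_eq_lintegral_mul _ (measurable_gaussianPDF m 1) (by fun_prop)]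
  simp only [Pi.mul_apply]
  have key : ∀ x : ℝ, gaussianPDF m 1 x * ENNReal.ofReal (Real.exp (s * x)) =
      ENNReal.ofReal (Real.exp (s * m + s ^ 2 / 2)) * gaussianPDF (m + s) 1 x := by
    intro x
    rw [gaussianPDF, gaussianPDF, ← ENNReal.ofReal_mul (gaussianPDFReal_nonneg _ _ _),
      ← ENNReal.ofReal_mul (Real.exp_nonneg _)]
    congr 1
    have h2 : ∀ A B : ℝ, Real.exp A * ((Real.sqrt (2 * π))⁻¹ * Real.exp B) =
        (Real.sqrt (2 * π))⁻¹ * Real.exp (A + B) := fun A B => by rw [Real.exp_add]; ring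
    simp only [gaussianPDFReal, NNReal.coe_one, mul_one]
    rw [mul_assoc, ← Real.exp_add, h2]
    congr 2
    ring
  rw [lintegral_congr key, lintegral_const_mul _ (measurable_gaussianPDF _ 1),
    lintegral_gaussianPDF_eq_one _ one_ne_zero, mul_one]

lemma lintegral_exp_gaussian' (m s : ℝ) :
    ∫⁻ x, ENNReal.ofReal (Real.exp (s * (m - x))) ∂gaussianReal m 1 =
      ENNReal.ofReal (Real.exp (s ^ 2 / 2)) := by
  rw [gaussianReal_of_var_ne_zero m one_ne_zero,
    lintegral_withDensity_eq_lintegral_mul _ (measurable_gaussianPDF m 1) (by fun_prop)]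
  simp only [Pi.mul_apply]
  have key : ∀ x : ℝ, gaussianPDF m 1 x * ENNReal.ofReal (Real.exp (s * (m - x))) =
      ENNReal.ofReal (Real.exp (s ^ 2 / 2)) * gaussianPDF (m - s) 1 x := by
    intro x
    rw [gaussianPDF, gaussianPDF, ← ENNReal.ofReal_mul (gaussianPDFReal_nonneg _ _ _),
      ← ENNReal.ofReal_mul (Real.exp_nonneg _)]
    congr 1
    have h2 : ∀ A B : ℝ, Real.exp A * ((Real.sqrt (2 * π))⁻¹ * Real.exp B) =
        (Real.sqrt (2 * π))⁻¹ * Real.exp (A + B) := fun A B => by rw [Real.exp_add]; ring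
    simp only [gaussianPDFReal, NNReal.coe_one, mul_one]
    rw [mul_assoc, ← Real.exp_add, h2]
    congr 2
    ring
  rw [lintegral_congr key, lintegral_const_mul _ (measurable_gaussianPDF _ 1),
    lintegral_gaussianPDF_eq_one _ one_ne_zero, mul_one]

lemma lintegral_exp_sq_gaussian {c : ℝ} (hc : c < 1/2) :
    ∫⁻ x, ENNReal.ofReal (Real.exp (c * x ^ 2)) ∂gaussianReal 0 1 =
      ENNReal.ofReal ((Real.sqrt (1 - 2 * c))⁻¹) := by
  have hb : 0 < 1/2 - c := by linarith
  rw [gaussianReal_of_var_ne_zero 0 one_ne_zero,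
    lintegral_withDensity_eq_lintegral_mul _ (measurable_gaussianPDF 0 1) (by fun_prop)]
  simp only [Pi.mul_apply]
  have key : ∀ x : ℝ, gaussianPDF 0 1 x * ENNReal.ofReal (Real.exp (c * x ^ 2)) =
      ENNReal.ofReal ((Real.sqrt (2 * π))⁻¹ * Real.exp (-(1/2 - c) * x ^ 2)) := by
    intro x
    rw [gaussianPDF, ← ENNReal.ofReal_mul (gaussianPDFReal_nonneg _ _ _)]
    congr 1
    simp only [gaussianPDFReal, NNReal.coe_one, mul_one, sub_zero]
    rw [mul_assoc, ← Real.exp_add]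
    congr 2
    ring
  rw [lintegral_congr key]
  rw [← ofReal_integral_eq_lintegral_ofReal
    (((integrable_exp_neg_mul_sq hb).const_mul _))
    (Filter.Eventually.of_forall fun x => by positivity)]
  rw [integral_const_mul, integral_gaussian]
  congr 1
  rw [← Real.sqrt_inv, ← Real.sqrt_mul (by positivity), ← Real.sqrt_inv]
  congr 1
  have hπ := Real.pi_pos
  have h1 : (1:ℝ) - 2 * c ≠ 0 := by linarith
  field_simp

lemma log_le_half_sub_inv {x : ℝ} (hx : 1 ≤ x) : Real.log x ≤ (x - x⁻¹) / 2 := by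
  have h0 : (0:ℝ) < 1 := one_pos
  set f : ℝ → ℝ := fun y => (y - y⁻¹) / 2 - Real.log y with hf
  have hder : ∀ y ∈ Set.Ici (1:ℝ), HasDerivAt f ((1 + y⁻¹^2) / 2 - y⁻¹) y := by
    intro y hy
    have hy0 : y ≠ 0 := by intro h; rw [h] at hy; norm_num at hy
    have h1 : HasDerivAt (fun y : ℝ => (y - y⁻¹) / 2) ((1 - -(y^2)⁻¹) / 2) y :=
      ((hasDerivAt_id y).sub (hasDerivAt_inv hy0)).div_const 2
    have h2 : HasDerivAt Real.log y⁻¹ y := Real.hasDerivAt_log hy0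
    refine (h1.sub h2).congr_deriv ?_
    rw [inv_pow]
    ring
  have hmono : MonotoneOn f (Set.Ici 1) := by
    apply monotoneOn_of_deriv_nonneg (convex_Ici 1)
    · exact ContinuousOn.sub
        (((continuousOn_id).sub (ContinuousOn.inv₀ continuousOn_id
          (fun y hy => by rw [Set.mem_Ici] at hy; intro h; rw [id_eq] at h; rw [h] at hy; norm_num at hy))).div_const 2)
        (Real.continuousOn_log.mono (fun y hy => by
          simp only [Set.mem_compl_iff, Set.mem_singleton_iff]
          intro h; rw [Set.mem_Ici] at hy; linarith))
    · intro y hy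
      rw [interior_Ici] at hy
      exact (hder y (Set.mem_Ici.mpr (le_of_lt hy))).differentiableAt.differentiableWithinAt
    · intro y hy
      rw [interior_Ici] at hy
      rw [(hder y (Set.mem_Ici.mpr (le_of_lt hy))).deriv]
      have hy0 : 0 < y := lt_trans one_pos hy
      have : (1 + y⁻¹^2)/2 - y⁻¹ = (1 - y⁻¹)^2/2 + (y⁻¹^2 - y⁻¹^2)/2 := by ring
      nlinarith [sq_nonneg (1 - y⁻¹)]
  have := hmono (Set.mem_Ici.mpr le_rfl) (Set.mem_Ici.mpr hx) hx
  simp only [hf, Real.log_one, inv_one] at this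
  linarith

lemma chernoff_opt (d : ℕ) (hd : 0 < d) (t : ℝ) (ht : 0 < t) :
    Real.exp (-(t / (Real.sqrt (2 * d) + 2 * t) * ((d : ℝ) + Real.sqrt (2 * d) * t + t ^ 2))) *
      ((Real.sqrt (1 - 2 * (t / (Real.sqrt (2 * d) + 2 * t))))⁻¹) ^ d ≤
      Real.exp (-t ^ 2 / 2) := by
  set s0 := Real.sqrt (2 * d) with hs0def
  have h2d : (0:ℝ) < 2 * d := by positivity
  have hs0 : 0 < s0 := Real.sqrt_pos.mpr h2d
  have hs0sq : s0 ^ 2 = 2 * d := Real.sq_sqrt h2d.le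
  have hden : 0 < s0 + 2 * t := by linarith
  set c := t / (s0 + 2 * t) with hcdef
  set a := (d : ℝ) + s0 * t + t ^ 2 with hadef
  set x := (s0 + 2 * t) / s0 with hxdef
  have hx1 : 1 ≤ x := by rw [hxdef, le_div_iff₀ hs0]; linarith
  have hx0 : 0 < x := lt_of_lt_of_le one_pos hx1
  have h2c : 1 - 2 * c = x⁻¹ := by
    rw [hcdef, hxdef]
    field_simp
    ring
  have hinv : (Real.sqrt (1 - 2 * c))⁻¹ = Real.sqrt x := by
    rw [h2c, Real.sqrt_inv, inv_inv]
  have hsx : Real.sqrt x = Real.exp (Real.log x / 2) := by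
    rw [← Real.log_sqrt hx0.le, Real.exp_log (Real.sqrt_pos.mpr hx0)]
  rw [hinv, hsx, ← Real.exp_nat_mul, ← Real.exp_add, Real.exp_le_exp]
  have hlog : Real.log x ≤ (x - x⁻¹) / 2 := log_le_half_sub_inv hx1
  have hdr : (d : ℝ) = s0 ^ 2 / 2 := by rw [hs0sq]; ring
  have heq : -(c * a) + ((d:ℝ) / 2) * ((x - x⁻¹) / 2) = -t ^ 2 / 2 := by
    rw [hcdef, hadef, hxdef, hdr]
    field_simp
    ring
  have hmul := mul_le_mul_of_nonneg_left hlog (by positivity : (0:ℝ) ≤ (d:ℝ) / 2)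
  calc -(c * a) + (d : ℝ) * (Real.log x / 2) = -(c*a) + ((d:ℝ)/2) * Real.log x := by ring
    _ ≤ -(c*a) + ((d:ℝ)/2) * ((x - x⁻¹)/2) := by linarith
    _ = -t^2/2 := heq

lemma mgf_bound (d n : ℕ) (hn : 0 < n) (μ : Fin d → ℝ) {c : ℝ} (hc0 : 0 < c) (hc : c < 1/2) :
    ∫⁻ X, ENNReal.ofReal (Real.exp (c * n * ∑ j, (μ j - (n : ℝ)⁻¹ * ∑ i, X i j) ^ 2))
      ∂(Measure.pi fun _ : Fin n => Measure.pi fun j : Fin d => gaussianReal (μ j) 1)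
    = ENNReal.ofReal (((Real.sqrt (1 - 2 * c))⁻¹) ^ d) := by
  have hn' : (n : ℝ) ≠ 0 := Nat.cast_ne_zero.mpr hn.ne'
  have hnpos : (0:ℝ) < n := by exact_mod_cast hn
  set κ : ℝ := c * n with hκdef
  have hκ : 0 < κ := by positivity
  set b : ℝ := Real.sqrt (2 * κ) with hbdef
  have hb2 : b ^ 2 = 2 * κ := Real.sq_sqrt (by positivity)
  set P := (Measure.pi fun _ : Fin n => Measure.pi fun j : Fin d => gaussianReal (μ j) 1) with hP
  set Γ := (Measure.pi fun _ : Fin d => gaussianReal 0 1) with hΓ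
  set W : (Fin n → Fin d → ℝ) → Fin d → ℝ := fun X j => μ j - (n : ℝ)⁻¹ * ∑ i, X i j with hW
  -- Step A
  have stepA : ∀ X : Fin n → Fin d → ℝ,
      ENNReal.ofReal (Real.exp (κ * ∑ j, W X j ^ 2)) =
        ∫⁻ g : Fin d → ℝ, ENNReal.ofReal (Real.exp (b * ∑ j, W X j * g j)) ∂Γ := by
    intro X
    have h1 : ∀ g : Fin d → ℝ, ENNReal.ofReal (Real.exp (b * ∑ j, W X j * g j)) =
        ∏ j, ENNReal.ofReal (Real.exp (b * W X j * (g j))) := by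
      intro g
      rw [Finset.mul_sum, Real.exp_sum, ENNReal.ofReal_prod_of_nonneg
        (fun _ _ => Real.exp_nonneg _)]
      exact Finset.prod_congr rfl fun j _ => by rw [← mul_assoc]
    rw [lintegral_congr h1, hΓ, lintegral_pi_prod (fun _ : Fin d => gaussianReal 0 1)
      (f := fun j y => ENNReal.ofReal (Real.exp (b * W X j * y)))
      (fun j => Measurable.ennreal_ofReal (by fun_prop))]
    simp only [lintegral_exp_gaussian 0 _]
    rw [← ENNReal.ofReal_prod_of_nonneg (fun _ _ => Real.exp_nonneg _), ← Real.exp_sum]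
    refine congrArg ENNReal.ofReal (congrArg Real.exp ?_)
    simp only [Finset.mul_sum]
    refine Finset.sum_congr rfl fun j _ => ?_
    rw [mul_zero, zero_add, mul_pow, hb2]
    ring
  -- Step C
  have stepC : ∀ g : Fin d → ℝ,
      ∫⁻ X, ENNReal.ofReal (Real.exp (b * ∑ j, W X j * g j)) ∂P =
        ENNReal.ofReal (Real.exp (c * ∑ j, g j ^ 2)) := by
    intro g
    have hexp : ∀ X : Fin n → Fin d → ℝ, b * ∑ j, W X j * g j =
        ∑ i, ∑ j, (b / n * g j) * (μ j - X i j) := by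
      intro X
      rw [Finset.sum_comm, Finset.mul_sum]
      refine Finset.sum_congr rfl fun j _ => ?_
      have : ∑ i : Fin n, (b / n * g j) * (μ j - X i j) =
          (b / n * g j) * ((n : ℝ) * μ j - ∑ i, X i j) := by
        rw [← Finset.mul_sum, Finset.sum_sub_distrib, Finset.sum_const, Finset.card_univ,
          Fintype.card_fin, nsmul_eq_mul]
      rw [this, hW]
      field_simp
    have h2 : ∀ X : Fin n → Fin d → ℝ,
        ENNReal.ofReal (Real.exp (b * ∑ j, W X j * g j)) =
          ∏ i, ∏ j, ENNReal.ofReal (Real.exp (b / n * g j * (μ j - X i j))) := by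
      intro X
      rw [hexp X, Real.exp_sum, ENNReal.ofReal_prod_of_nonneg (fun _ _ => Real.exp_nonneg _)]
      exact Finset.prod_congr rfl fun i _ => by
        rw [Real.exp_sum, ENNReal.ofReal_prod_of_nonneg (fun _ _ => Real.exp_nonneg _)]
    rw [lintegral_congr h2, hP, lintegral_pi_prod
      (fun _ : Fin n => Measure.pi fun j : Fin d => gaussianReal (μ j) 1)
      (f := fun _ x => ∏ j, ENNReal.ofReal (Real.exp (b / n * g j * (μ j - x j))))
      (fun i => Finset.measurable_prod _ fun j _ =>
        Measurable.ennreal_ofReal ((show Measurable fun y : ℝ =>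
            Real.exp (b / ↑n * g j * (μ j - y)) by fun_prop).comp (measurable_pi_apply j)))]
    have h3 : ∀ i : Fin n, ∫⁻ x : Fin d → ℝ,
        ∏ j, ENNReal.ofReal (Real.exp (b / n * g j * (μ j - x j)))
          ∂(Measure.pi fun j : Fin d => gaussianReal (μ j) 1) =
        ∏ j, ENNReal.ofReal (Real.exp ((b / n * g j) ^ 2 / 2)) := by
      intro i
      rw [lintegral_pi_prod (fun j : Fin d => gaussianReal (μ j) 1)
        (f := fun j y => ENNReal.ofReal (Real.exp (b / n * g j * (μ j - y))))
        (fun j => Measurable.ennreal_ofReal (by fun_prop))]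
      exact Finset.prod_congr rfl fun j _ => lintegral_exp_gaussian' (μ j) _
    rw [Finset.prod_congr rfl fun i _ => h3 i]
    rw [← ENNReal.ofReal_prod_of_nonneg (fun _ _ => Real.exp_nonneg _), ← Real.exp_sum,
      Finset.prod_const, ← ENNReal.ofReal_pow (Real.exp_nonneg _), ← Real.exp_nat_mul,
      Finset.card_univ, Fintype.card_fin]
    refine congrArg ENNReal.ofReal (congrArg Real.exp ?_)
    simp only [Finset.mul_sum]
    refine Finset.sum_congr rfl fun j _ => ?_
    rw [mul_pow, div_pow, hb2]
    field_simp
    ring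
  -- measurability of the double function
  have hmeas : Measurable (Function.uncurry fun (X : Fin n → Fin d → ℝ) (g : Fin d → ℝ) =>
      ENNReal.ofReal (Real.exp (b * ∑ j, W X j * g j))) := by
    apply Measurable.ennreal_ofReal
    apply Real.measurable_exp.comp
    apply Measurable.const_mul
    apply Finset.measurable_sum
    intro j _
    apply Measurable.mul
    · apply Measurable.const_sub
      apply Measurable.const_mul
      apply Finset.measurable_sum
      intro i _
      exact ((measurable_pi_apply j).comp ((measurable_pi_apply i).comp measurable_fst))
    · exact (measurable_pi_apply j).comp measurable_snd
  calc ∫⁻ X, ENNReal.ofReal (Real.exp (c * n * ∑ j, W X j ^ 2)) ∂P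
      = ∫⁻ X, ∫⁻ g, ENNReal.ofReal (Real.exp (b * ∑ j, W X j * g j)) ∂Γ ∂P := by
        refine lintegral_congr fun X => ?_
        rw [← stepA X]
    _ = ∫⁻ g, ∫⁻ X, ENNReal.ofReal (Real.exp (b * ∑ j, W X j * g j)) ∂P ∂Γ :=
        lintegral_lintegral_swap hmeas.aemeasurable
    _ = ∫⁻ g : Fin d → ℝ, ∏ j, ENNReal.ofReal (Real.exp (c * (g j) ^ 2)) ∂Γ := by
        refine lintegral_congr fun g => ?_
        rw [stepC g, Finset.mul_sum, Real.exp_sum,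
          ENNReal.ofReal_prod_of_nonneg (fun _ _ => Real.exp_nonneg _)]
    _ = ENNReal.ofReal (((Real.sqrt (1 - 2 * c))⁻¹) ^ d) := by
        rw [hΓ, lintegral_pi_prod (fun _ : Fin d => gaussianReal 0 1)
          (f := fun j y => ENNReal.ofReal (Real.exp (c * y ^ 2)))
          (fun j => Measurable.ennreal_ofReal (by fun_prop))]
        simp only [lintegral_exp_sq_gaussian hc]
        rw [Finset.prod_const, Finset.card_univ, Fintype.card_fin,
          ← ENNReal.ofReal_pow (by positivity)]

/-- Let `μ̄` be the sample mean of `n` i.i.d. samples from `N(μ, I_d)`. Then for every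
`t > 0`, with probability at least `1 - exp(-t²/2)`, one has
`‖μ - μ̄‖ < √((d + √(2d)·t + t²)/n)`. -/
theorem sample_mean_deviation_bound (d n : ℕ) (hn : 0 < n) (μ : Fin d → ℝ)
    (t : ℝ) (ht : 0 < t) :
    ENNReal.ofReal (1 - Real.exp (-t ^ 2 / 2)) ≤
      (Measure.pi fun _ : Fin n => Measure.pi fun j : Fin d => gaussianReal (μ j) 1)
        {X | Real.sqrt (∑ j, (μ j - (n : ℝ)⁻¹ * ∑ i, X i j) ^ 2)
          < Real.sqrt (((d : ℝ) + Real.sqrt (2 * d) * t + t ^ 2) / n)} := by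
  have hnpos : (0:ℝ) < n := by exact_mod_cast hn
  set P := (Measure.pi fun _ : Fin n => Measure.pi fun j : Fin d => gaussianReal (μ j) 1)
    with hP
  set S := {X : Fin n → Fin d → ℝ | Real.sqrt (∑ j, (μ j - (n : ℝ)⁻¹ * ∑ i, X i j) ^ 2)
    < Real.sqrt (((d : ℝ) + Real.sqrt (2 * d) * t + t ^ 2) / n)} with hS
  have hprob : IsProbabilityMeasure P := by rw [hP]; infer_instance
  by_cases hd : d = 0
  · subst hd
    have hset : S = Set.univ := by
      ext X
      simp only [hS, Set.mem_setOf_eq, Set.mem_univ, iff_true]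
      have h0 : ∑ j : Fin 0, (μ j - (n : ℝ)⁻¹ * ∑ i, X i j) ^ 2 = 0 := by simp
      rw [h0, Real.sqrt_zero]
      apply Real.sqrt_pos.mpr
      have : Real.sqrt (2 * (0:ℕ)) = 0 := by simp
      rw [this]
      push_cast
      positivity
    rw [hset, measure_univ]
    exact ENNReal.ofReal_le_one.mpr (by linarith [Real.exp_nonneg (-t^2/2)])
  · have hd1 : 0 < d := Nat.pos_of_ne_zero hd
    have h2d : (0:ℝ) < 2 * d := by positivity
    have hs0 : 0 < Real.sqrt (2 * d) := Real.sqrt_pos.mpr h2d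
    set s0 := Real.sqrt (2 * d) with hs0def
    have hden : 0 < s0 + 2 * t := by linarith
    set c := t / (s0 + 2 * t) with hcdef
    have hc0 : 0 < c := by positivity
    have hc : c < 1/2 := by rw [hcdef, div_lt_iff₀ hden]; linarith
    set a := (d : ℝ) + s0 * t + t ^ 2 with hadef
    have ha : 0 < a := by positivity
    -- Chernoff bound on the complement
    have hmeasf : Measurable (fun X : Fin n → Fin d → ℝ =>
        ENNReal.ofReal (Real.exp (c * n * ∑ j, (μ j - (n : ℝ)⁻¹ * ∑ i, X i j) ^ 2))) := by
      apply Measurable.ennreal_ofReal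
      apply Real.measurable_exp.comp
      apply Measurable.const_mul
      apply Finset.measurable_sum
      intro j _
      exact (measurable_const.sub (Measurable.const_mul
        (Finset.measurable_sum _ fun i _ =>
          (measurable_pi_apply j).comp (measurable_pi_apply i)) _)).pow_const 2
    have hsub : Sᶜ ⊆ {X : Fin n → Fin d → ℝ | ENNReal.ofReal (Real.exp (c * a)) ≤
        ENNReal.ofReal (Real.exp (c * n * ∑ j, (μ j - (n : ℝ)⁻¹ * ∑ i, X i j) ^ 2))} := by
      intro X hX
      simp only [hS, Set.mem_compl_iff, Set.mem_setOf_eq, not_lt] at hX ⊢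
      have hsum0 : 0 ≤ ∑ j, (μ j - (n : ℝ)⁻¹ * ∑ i, X i j) ^ 2 :=
        Finset.sum_nonneg fun _ _ => sq_nonneg _
      have hsum : a / n ≤ ∑ j, (μ j - (n : ℝ)⁻¹ * ∑ i, X i j) ^ 2 := by
        have h1 : (0:ℝ) ≤ a / n := by positivity
        calc a / n = Real.sqrt (a / n) ^ 2 := (Real.sq_sqrt h1).symm
          _ ≤ Real.sqrt (∑ j, (μ j - (n : ℝ)⁻¹ * ∑ i, X i j) ^ 2) ^ 2 := by
              apply pow_le_pow_left₀ (Real.sqrt_nonneg _) hX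
          _ = _ := Real.sq_sqrt hsum0
      apply ENNReal.ofReal_le_ofReal
      apply Real.exp_le_exp.mpr
      calc c * a = c * n * (a / n) := by field_simp
        _ ≤ c * n * ∑ j, (μ j - (n : ℝ)⁻¹ * ∑ i, X i j) ^ 2 := by
            apply mul_le_mul_of_nonneg_left hsum (by positivity)
    have markov := mul_meas_ge_le_lintegral₀ (μ := P) hmeasf.aemeasurable
      (ENNReal.ofReal (Real.exp (c * a)))
    rw [hP, mgf_bound d n hn μ hc0 hc, ← hP] at markov
    have h5 : P Sᶜ ≤ P {X : Fin n → Fin d → ℝ | ENNReal.ofReal (Real.exp (c * a)) ≤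
        ENNReal.ofReal (Real.exp (c * n * ∑ j, (μ j - (n : ℝ)⁻¹ * ∑ i, X i j) ^ 2))} :=
      measure_mono hsub
    have h6 := mul_le_mul_right markov (ENNReal.ofReal (Real.exp (-(c * a))))
    rw [← mul_assoc, ← ENNReal.ofReal_mul (Real.exp_nonneg _), ← Real.exp_add,
      neg_add_cancel, Real.exp_zero, ENNReal.ofReal_one, one_mul,
      ← ENNReal.ofReal_mul (Real.exp_nonneg _)] at h6
    have key : P Sᶜ ≤ ENNReal.ofReal (Real.exp (-t ^ 2 / 2)) :=
      le_trans (le_trans h5 h6) (ENNReal.ofReal_le_ofReal (chernoff_opt d hd1 t ht))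
    have h1 : (1:ℝ≥0∞) ≤ P S + P Sᶜ := by
      calc (1:ℝ≥0∞) = P (S ∪ Sᶜ) := by rw [Set.union_compl_self, measure_univ]
        _ ≤ P S + P Sᶜ := measure_union_le _ _
    calc ENNReal.ofReal (1 - Real.exp (-t ^ 2 / 2))
        = 1 - ENNReal.ofReal (Real.exp (-t ^ 2 / 2)) := by
          rw [ENNReal.ofReal_sub _ (Real.exp_nonneg _), ENNReal.ofReal_one]
      _ ≤ 1 - P Sᶜ := tsub_le_tsub_left key 1
      _ ≤ P S := tsub_le_iff_right.mpr h1
end
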